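/- With L⁻¹ given by (L⁻¹φ)(t) = φ(t) − ((1−α)/2) φ((−t + αa + a)/α) for t < a and ((1+α)/2) φ((t + αa − a)/α) for t > a (with φ extended by zero beyond π), there exists a constant C > 0 depending only on α such that ∫₀^π |(L⁻¹φ)(t)|² dt ≤ C ∫₀^π |φ(t)|² dt for all φ ∈ L²(0, π). In particular one can take C = 2 + α(1−α)²/2 + α(1+α)²/4. -/

import Mathlib

open MeasureTheory

/-- Explicit L² bound for L⁻¹: ∫₀^π |(L⁻¹φ)(t)|² dt ≤ C ∫₀^π |φ(t)|² dt with
C = 2 + α(1−α)²/2 + α(1+α)²/4. -/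
theorem stmt8 (a α : ℝ) (ha : 0 < a) (haπ : a < Real.pi) (hα : 0 < α)
    (hcond : a * (1 + α) > Real.pi * α)
    (Linv : (ℝ → ℝ) → (ℝ → ℝ))
    (hLinv : ∀ φ t, Linv φ t =
      if t < a then φ t - ((1 - α) / 2) * φ ((-t + α * a + a) / α)
      else ((1 + α) / 2) * φ ((t + α * a - a) / α)) :
    ∃ C : ℝ, 0 < C ∧ C = 2 + α * (1 - α) ^ 2 / 2 + α * (1 + α) ^ 2 / 4 ∧
      ∀ φ : ℝ → ℝ, (∀ t, Real.pi < t → φ t = 0) →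
        MemLp φ 2 (volume.restrict (Set.Ioo 0 Real.pi)) →
        ∫ t in Set.Ioo (0 : ℝ) Real.pi, |Linv φ t| ^ 2 ≤
          C * ∫ t in Set.Ioo (0 : ℝ) Real.pi, |φ t| ^ 2 := by
  have hπ : (0:ℝ) < Real.pi := lt_trans ha haπ
  set C : ℝ := 2 + α * (1 - α) ^ 2 / 2 + α * (1 + α) ^ 2 / 4 with hC
  refine ⟨C, by positivity, rfl, ?_⟩
  intro φ hφ0 hφ2
  set S : Set ℝ := Set.Ioo (0:ℝ) Real.pi with hS
  have hSm : MeasurableSet S := measurableSet_Ioo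
  -- measurable representative
  obtain ⟨w, hwm, heq⟩ : ∃ w : ℝ → ℝ, Measurable w ∧ φ =ᵐ[volume.restrict S] w :=
    ⟨hφ2.1.mk φ, hφ2.1.stronglyMeasurable_mk.measurable, hφ2.1.ae_eq_mk⟩
  -- null set where φ and w differ, enlarged to a measurable one
  obtain ⟨N, hN₀N, hNm, hN0⟩ :
      ∃ N, {x | φ x ≠ w x} ∩ S ⊆ N ∧ MeasurableSet N ∧ volume N = 0 := by
    apply exists_measurable_superset_of_null
    have h : (volume.restrict S) {x | ¬ φ x = w x} = 0 := heq
    rwa [Measure.restrict_apply' hSm] at h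
  set φ'' : ℝ → ℝ := S.indicator w with hφ''
  have hφ''m : Measurable φ'' := hwm.indicator hSm
  set g : ℝ → ℝ := fun t => φ'' t ^ 2 with hg
  have hgm : Measurable g := hφ''m.pow_const 2
  have hg0 : ∀ t, 0 ≤ g t := fun t => sq_nonneg _
  -- key: whenever t ∈ S and t ∉ N, φ t = φ'' t
  have hkey : ∀ t, t ∈ S → t ∉ N → φ t = φ'' t := by
    intro t htS htN
    have h : φ t = w t := by
      by_contra h
      exact htN (hN₀N ⟨h, htS⟩)
    rw [h, hφ'', Set.indicator_of_mem htS]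
  -- whenever t > 0, t ∉ N, t ≠ π : φ t = φ'' t  (using vanishing beyond π)
  have hkey2 : ∀ t, 0 < t → t ∉ N → t ≠ Real.pi → φ t = φ'' t := by
    intro t ht0 htN htπ
    rcases lt_trichotomy t Real.pi with h | h | h
    · exact hkey t ⟨ht0, h⟩ htN
    · exact absurd h htπ
    · rw [hφ0 t h, hφ'', Set.indicator_of_notMem]
      intro hmem
      exact absurd hmem.2 (not_lt.mpr h.le)
  -- integrability of g
  have hg_int : Integrable g volume := by
    have h1 : g = S.indicator (fun t => w t ^ 2) := by
      funext t
      by_cases h : t ∈ S <;> simp [hg, hφ'', Set.indicator_of_mem, Set.indicator_of_notMem, h]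
    rw [h1, integrable_indicator_iff hSm]
    have h2 : Integrable (fun t => φ t ^ 2) (volume.restrict S) := hφ2.integrable_sq
    exact h2.congr (heq.mono fun x hx => by simp [hx])
  set J : ℝ := ∫ t, g t with hJdef
  have hJ0 : 0 ≤ J := integral_nonneg hg0
  -- RHS rewriting
  have hRHS : ∫ t in S, |φ t| ^ 2 = J := by
    have h1 : ∫ t in S, |φ t| ^ 2 = ∫ t in S, g t := by
      apply integral_congr_ae
      filter_upwards [heq, ae_restrict_mem hSm] with t ht htS
      rw [sq_abs, ht, hg]
      simp only [hφ'', Set.indicator_of_mem htS]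
    have h2 : (fun t => g t) = S.indicator g := by
      funext t
      by_cases h : t ∈ S
      · rw [Set.indicator_of_mem h]
      · rw [Set.indicator_of_notMem h, hg]
        simp [hφ'', Set.indicator_of_notMem h]
    have h3 : J = ∫ t in S, g t := by
      rw [hJdef]
      conv_lhs => rw [h2]
      exact integral_indicator hSm
    rw [h1, h3]
  -- the two affine maps
  set ψ₁ : ℝ → ℝ := fun t => (-t + α * a + a) / α with hψ₁
  set ψ₂ : ℝ → ℝ := fun t => (t + α * a - a) / α with hψ₂
  have hψ₁eq : ∀ t, ψ₁ t = (-α⁻¹) * t + (α * a + a) / α := by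
    intro t; rw [hψ₁]; field_simp; ring
  have hψ₂eq : ∀ t, ψ₂ t = α⁻¹ * t + (α * a - a) / α := by
    intro t; rw [hψ₂]; field_simp; ring
  have hψ₁m : Measurable ψ₁ := by rw [hψ₁]; fun_prop
  have hψ₂m : Measurable ψ₂ := by rw [hψ₂]; fun_prop
  -- preimages of null sets are null
  have hpre : ∀ (b c : ℝ), b ≠ 0 → volume ((fun t => b * t + c) ⁻¹' N) = 0 := by
    intro b c hb
    have h1 : (fun t : ℝ => b * t + c) ⁻¹' N = (b * ·) ⁻¹' ((fun x => x + c) ⁻¹' N) := by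
      ext t; simp [Set.mem_preimage]
    rw [h1, Real.volume_preimage_mul_left hb, measure_preimage_add_right volume c N, hN0,
      mul_zero]
  have hpre₁ : volume (ψ₁ ⁻¹' N) = 0 := by
    have h : ψ₁ ⁻¹' N = (fun t => (-α⁻¹) * t + (α * a + a) / α) ⁻¹' N := by
      ext t; simp only [Set.mem_preimage, hψ₁eq t]
    rw [h]; exact hpre _ _ (by simp [hα.ne'])
  have hpre₂ : volume (ψ₂ ⁻¹' N) = 0 := by
    have h : ψ₂ ⁻¹' N = (fun t => α⁻¹ * t + (α * a - a) / α) ⁻¹' N := by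
      ext t; simp only [Set.mem_preimage, hψ₂eq t]
    rw [h]; exact hpre _ _ (by simp [hα.ne'])
  -- the bad set
  set B : Set ℝ := N ∪ ψ₁ ⁻¹' N ∪ ψ₂ ⁻¹' N ∪ {α * a + a - α * Real.pi} ∪
    {α * Real.pi - α * a + a} with hB
  have hB0 : volume B = 0 := by
    rw [hB]
    refine measure_union_null (measure_union_null (measure_union_null
      (measure_union_null hN0 hpre₁) hpre₂) ?_) ?_ <;> exact measure_singleton _
  set c₁ : ℝ := (1 - α) / 2 with hc₁
  set c₂ : ℝ := (1 + α) / 2 with hc₂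
  set F₁ : ℝ → ℝ := fun t => (φ'' t - c₁ * φ'' (ψ₁ t)) ^ 2 with hF₁
  set F₂ : ℝ → ℝ := fun t => (c₂ * φ'' (ψ₂ t)) ^ 2 with hF₂
  set F : ℝ → ℝ := fun t => if t < a then F₁ t else F₂ t with hF
  -- a.e. identification of the integrand
  have hLcong : (fun t => |Linv φ t| ^ 2) =ᵐ[volume.restrict S] F := by
    have hB' : ∀ᵐ t ∂(volume.restrict S), t ∉ B :=
      Filter.Eventually.filter_mono (ae_mono Measure.restrict_le_self)
        (measure_eq_zero_iff_ae_notMem.1 hB0)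
    filter_upwards [hB', ae_restrict_mem hSm] with t htB htS
    have htN : t ∉ N := fun h => htB (by simp [hB, h])
    have htN₁ : ψ₁ t ∉ N := fun h => htB (by simp [hB, Set.mem_preimage, h])
    have htN₂ : ψ₂ t ∉ N := fun h => htB (by simp [hB, Set.mem_preimage, h])
    have htp₁ : t ≠ α * a + a - α * Real.pi := fun h => htB (by simp [hB, h])
    have htp₂ : t ≠ α * Real.pi - α * a + a := fun h => htB (by simp [hB, h])
    simp only [hLinv, sq_abs, hF]
    by_cases hta : t < a
    · simp only [if_pos hta, hF₁]
      have h1 : φ t = φ'' t := hkey t htS htN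
      have h2 : φ ((-t + α * a + a) / α) = φ'' (ψ₁ t) := by
        have hgt : 0 < ψ₁ t := by
          rw [hψ₁]
          apply div_pos _ hα
          nlinarith
        have hne : ψ₁ t ≠ Real.pi := by
          intro h
          apply htp₁
          rw [hψ₁] at h
          field_simp at h
          linarith
        exact hkey2 _ hgt htN₁ hne
      rw [h1, h2]
    · simp only [if_neg hta, hF₂]
      have h2 : φ ((t + α * a - a) / α) = φ'' (ψ₂ t) := by
        have hgt : 0 < ψ₂ t := by
          rw [hψ₂]
          apply div_pos _ hα
          have := not_lt.1 hta
          nlinarith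
        have hne : ψ₂ t ≠ Real.pi := by
          intro h
          apply htp₂
          rw [hψ₂] at h
          field_simp at h
          linarith
        exact hkey2 _ hgt htN₂ hne
      rw [h2]
  -- integrability of compositions with affine maps
  have hcomp : ∀ (b c : ℝ), b ≠ 0 → Integrable (fun t => g (b * t + c)) volume := by
    intro b c hb
    have h1 : Integrable (fun x => g (x + c)) volume := hg_int.comp_add_right c
    exact (integrable_comp_mul_left_iff (fun x => g (x + c)) hb).2 h1
  have hcomp₁ : Integrable (fun t => g (ψ₁ t)) volume := by
    have h := hcomp (-α⁻¹) ((α * a + a) / α) (by simp [hα.ne'])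
    apply h.congr
    apply ae_of_all
    intro t
    simp only [hψ₁eq]
  have hcomp₂ : Integrable (fun t => g (ψ₂ t)) volume := by
    have h := hcomp α⁻¹ ((α * a - a) / α) (by simp [hα.ne'])
    apply h.congr
    apply ae_of_all
    intro t
    simp only [hψ₂eq]
  -- integrability of F₁, F₂
  have hF₁m : Measurable F₁ := (hφ''m.sub ((hφ''m.comp hψ₁m).const_mul c₁)).pow_const 2
  have hptwise : ∀ t, F₁ t ≤ 2 * g t + 2 * c₁ ^ 2 * g (ψ₁ t) := by
    intro t
    simp only [hF₁, hg]
    nlinarith [sq_nonneg (φ'' t + c₁ * φ'' (ψ₁ t))]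
  have hdom_int : Integrable (fun t => 2 * g t + 2 * c₁ ^ 2 * g (ψ₁ t)) volume :=
    (hg_int.const_mul 2).add (hcomp₁.const_mul (2 * c₁ ^ 2))
  have hF₁int : Integrable F₁ volume := by
    apply Integrable.mono' hdom_int hF₁m.aestronglyMeasurable
    apply ae_of_all
    intro t
    rw [Real.norm_eq_abs, abs_of_nonneg (sq_nonneg _)]
    exact hptwise t
  have hF₂eq : F₂ = fun t => c₂ ^ 2 * g (ψ₂ t) := by
    funext t; simp only [hF₂, hg]; ring
  have hF₂int : Integrable F₂ volume := by
    rw [hF₂eq]; exact hcomp₂.const_mul _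
  -- change of variables bounds
  have hcov₁ : ∫ t in Set.Ioo (0:ℝ) a, g (ψ₁ t) ≤ α * J := by
    have hle : a ≤ (α * a + a) / α := by
      rw [le_div_iff₀ hα]; nlinarith
    have h1 : ∫ t in Set.Ioo (0:ℝ) a, g (ψ₁ t)
        = α * ∫ t in Set.Ioc a ((α * a + a) / α), g t := by
      rw [← integral_Ioc_eq_integral_Ioo, ← intervalIntegral.integral_of_le ha.le]
      simp only [hψ₁eq]
      rw [intervalIntegral.integral_comp_mul_add g
        (by simp [hα.ne'] : (-α⁻¹ : ℝ) ≠ 0) ((α * a + a) / α)]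
      rw [show -α⁻¹ * 0 + (α * a + a) / α = (α * a + a) / α by ring,
        show -α⁻¹ * a + (α * a + a) / α = a by field_simp; ring]
      rw [intervalIntegral.integral_symm, intervalIntegral.integral_of_le hle]
      rw [smul_eq_mul]
      field_simp
    rw [h1]
    exact mul_le_mul_of_nonneg_left (setIntegral_le_integral hg_int (ae_of_all _ hg0)) hα.le
  have hcov₂ : ∫ t in Set.Ico a Real.pi, g (ψ₂ t) ≤ α * J := by
    have hle : a ≤ (Real.pi + α * a - a) / α := by
      rw [le_div_iff₀ hα]; nlinarith
    have h1 : ∫ t in Set.Ico a Real.pi, g (ψ₂ t)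
        = α * ∫ t in Set.Ioc a ((Real.pi + α * a - a) / α), g t := by
      rw [integral_Ico_eq_integral_Ioo, ← integral_Ioc_eq_integral_Ioo,
        ← intervalIntegral.integral_of_le haπ.le]
      simp only [hψ₂eq]
      rw [intervalIntegral.integral_comp_mul_add g
        (by simp [hα.ne'] : (α⁻¹ : ℝ) ≠ 0) ((α * a - a) / α)]
      rw [show α⁻¹ * a + (α * a - a) / α = a by field_simp; ring,
        show α⁻¹ * Real.pi + (α * a - a) / α = (Real.pi + α * a - a) / α by field_simp; ring]
      rw [intervalIntegral.integral_of_le hle]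
      rw [smul_eq_mul, inv_inv]
    rw [h1]
    exact mul_le_mul_of_nonneg_left (setIntegral_le_integral hg_int (ae_of_all _ hg0)) hα.le
  -- splitting the domain
  have hdisj : Disjoint (Set.Ioo (0:ℝ) a) (Set.Ico a Real.pi) := by
    apply Set.disjoint_left.mpr
    rintro x ⟨_, h2⟩ ⟨h3, _⟩
    exact absurd h3 (not_le.mpr h2)
  have heqon1 : Set.EqOn F F₁ (Set.Ioo (0:ℝ) a) := by
    intro t ht
    simp only [hF, if_pos ht.2]
  have heqon2 : Set.EqOn F F₂ (Set.Ico a Real.pi) := by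
    intro t ht
    simp only [hF, if_neg (not_lt.mpr ht.1)]
  have hsplit : ∫ t in S, F t
      = (∫ t in Set.Ioo (0:ℝ) a, F₁ t) + ∫ t in Set.Ico a Real.pi, F₂ t := by
    rw [hS, ← Set.Ioo_union_Ico_eq_Ioo ha haπ.le]
    rw [setIntegral_union hdisj measurableSet_Ico
      (hF₁int.integrableOn.congr_fun heqon1.symm measurableSet_Ioo)
      (hF₂int.integrableOn.congr_fun heqon2.symm measurableSet_Ico)]
    rw [setIntegral_congr_fun measurableSet_Ioo heqon1,
      setIntegral_congr_fun measurableSet_Ico heqon2]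
  -- bound the two pieces
  have hleft : ∫ t in Set.Ioo (0:ℝ) a, F₁ t ≤ 2 * J + 2 * c₁ ^ 2 * (α * J) := by
    have hb1 : ∫ t in Set.Ioo (0:ℝ) a, F₁ t
        ≤ ∫ t in Set.Ioo (0:ℝ) a, (2 * g t + 2 * c₁ ^ 2 * g (ψ₁ t)) :=
      setIntegral_mono_on hF₁int.integrableOn hdom_int.integrableOn measurableSet_Ioo
        (fun t _ => hptwise t)
    have hb2 : ∫ t in Set.Ioo (0:ℝ) a, (2 * g t + 2 * c₁ ^ 2 * g (ψ₁ t))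
        = 2 * (∫ t in Set.Ioo (0:ℝ) a, g t)
          + 2 * c₁ ^ 2 * ∫ t in Set.Ioo (0:ℝ) a, g (ψ₁ t) := by
      rw [integral_add ((hg_int.const_mul 2).integrableOn)
        ((hcomp₁.const_mul (2 * c₁ ^ 2)).integrableOn), integral_const_mul, integral_const_mul]
    have hb3 : ∫ t in Set.Ioo (0:ℝ) a, g t ≤ J :=
      setIntegral_le_integral hg_int (ae_of_all _ hg0)
    have hb4 := hcov₁
    calc ∫ t in Set.Ioo (0:ℝ) a, F₁ t
        ≤ 2 * (∫ t in Set.Ioo (0:ℝ) a, g t)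
          + 2 * c₁ ^ 2 * ∫ t in Set.Ioo (0:ℝ) a, g (ψ₁ t) := by rw [← hb2]; exact hb1
      _ ≤ 2 * J + 2 * c₁ ^ 2 * (α * J) := by gcongr <;> positivity
  have hright : ∫ t in Set.Ico a Real.pi, F₂ t ≤ c₂ ^ 2 * (α * J) := by
    have hb1 : ∫ t in Set.Ico a Real.pi, F₂ t
        = c₂ ^ 2 * ∫ t in Set.Ico a Real.pi, g (ψ₂ t) := by
      rw [hF₂eq, integral_const_mul]
    rw [hb1]
    exact mul_le_mul_of_nonneg_left hcov₂ (sq_nonneg _)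
  -- conclusion
  calc ∫ t in S, |Linv φ t| ^ 2 = ∫ t in S, F t := integral_congr_ae hLcong
    _ = (∫ t in Set.Ioo (0:ℝ) a, F₁ t) + ∫ t in Set.Ico a Real.pi, F₂ t := hsplit
    _ ≤ (2 * J + 2 * c₁ ^ 2 * (α * J)) + c₂ ^ 2 * (α * J) := add_le_add hleft hright
    _ = C * J := by rw [hC, hc₁, hc₂]; ring
    _ = C * ∫ t in S, |φ t| ^ 2 := by rw [hRHS]
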